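/- The only numerical semigroups that are Arf and generated by an interval are the ordinary semigroups {0} ∪ {n ∈ ℕ : n ≥ c} for some nonnegative integer c. -/

import Mathlib

structure NumericalSemigroup where
  carrier : Set ℕ
  zero_mem : 0 ∈ carrier
  add_mem : ∀ {a b : ℕ}, a ∈ carrier → b ∈ carrier → a + b ∈ carrier
  finite_compl : Set.Finite carrierᶜ

namespace NumericalSemigroup

/-- The genus: the number of gaps. -/
noncomputable def genus (Λ : NumericalSemigroup) : ℕ := Λ.carrierᶜ.ncard

/-- The conductor: the smallest `c` with `c + ℕ ⊆ Λ`. -/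
noncomputable def conductor (Λ : NumericalSemigroup) : ℕ := sInf {c : ℕ | ∀ n, c ≤ n → n ∈ Λ.carrier}

/-- `f` is the (unique) increasing enumeration of `Λ`. -/
noncomputable def IsEnum (Λ : NumericalSemigroup) (f : ℕ → ℕ) : Prop :=
  StrictMono f ∧ Set.range f = Λ.carrier

/-- The Arf property: `λ_i + λ_j - λ_k ∈ Λ` for all `i ≥ j ≥ k`. -/
noncomputable def IsArf (Λ : NumericalSemigroup) : Prop :=
  ∀ f : ℕ → ℕ, Λ.IsEnum f → ∀ i j k : ℕ, k ≤ j → j ≤ i → f i + f j - f k ∈ Λ.carrier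

end NumericalSemigroup

/-- The set of all `ℕ`-linear combinations of the integers in `{i, i+1, …, j}`. -/
noncomputable def intervalGen (i j : ℕ) : Set ℕ :=
  {n : ℕ | ∃ m : ℕ → ℕ, n = ∑ t ∈ Finset.Icc i j, m t * t}

lemma ig_zero (i j : ℕ) : 0 ∈ intervalGen i j := ⟨fun _ => 0, by simp⟩

lemma ig_single {i j t : ℕ} (h : t ∈ Finset.Icc i j) : t ∈ intervalGen i j := by
  refine ⟨fun s => if s = t then 1 else 0, ?_⟩
  rw [Finset.sum_eq_single t]
  · simp
  · intro b _ hb; simp [hb]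
  · intro hb; exact absurd h hb

lemma ig_add {i j a b : ℕ} (ha : a ∈ intervalGen i j) (hb : b ∈ intervalGen i j) :
    a + b ∈ intervalGen i j := by
  obtain ⟨m1, h1⟩ := ha; obtain ⟨m2, h2⟩ := hb
  exact ⟨fun t => m1 t + m2 t, by simp [h1, h2, add_mul, Finset.sum_add_distrib]⟩

lemma ig_of_bounds {i j : ℕ} (hij : i ≤ j) :
    ∀ k n, k * i ≤ n → n ≤ k * j → n ∈ intervalGen i j := by
  intro k
  induction k with
  | zero => intro n _ h2; simp at h2; subst h2; exact ig_zero i j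
  | succ k ih =>
    intro n h1 h2
    rw [add_one_mul] at h1 h2
    have hki : k * i ≤ k * j := Nat.mul_le_mul_left k hij
    have h3 : i ≤ n - k * i := Nat.le_sub_of_add_le (by linarith)
    set t := min j (n - k * i) with ht
    have hti : i ≤ t := le_min hij h3
    have htj : t ≤ j := min_le_left _ _
    have htn0 : t ≤ n - k * i := min_le_right _ _
    have htn : t ≤ n := le_trans htn0 (Nat.sub_le _ _)
    have hlb : k * i ≤ n - t := by
      have : t + k * i ≤ n := Nat.add_le_of_le_sub (by linarith) htn0
      exact Nat.le_sub_of_add_le (by linarith)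
    have hub : n - t ≤ k * j := by
      rcases le_total j (n - k * i) with h | h
      · have : t = j := min_eq_left h
        rw [this]
        rw [Nat.sub_le_iff_le_add]; linarith
      · have : t = n - k * i := min_eq_right h
        rw [this, Nat.sub_sub_self (by linarith)]; exact hki
    have := ig_add (ih (n - t) hlb hub) (ig_single (Finset.mem_Icc.mpr ⟨hti, htj⟩))
    rwa [Nat.sub_add_cancel htn] at this

lemma ig_bounds {i j n : ℕ} (h : n ∈ intervalGen i j) :
    ∃ k, k * i ≤ n ∧ n ≤ k * j := by
  obtain ⟨m, hm⟩ := h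
  refine ⟨∑ t ∈ Finset.Icc i j, m t, ?_, ?_⟩
  · rw [Finset.sum_mul, hm]
    exact Finset.sum_le_sum fun t ht => Nat.mul_le_mul_left _ (Finset.mem_Icc.mp ht).1
  · rw [Finset.sum_mul, hm]
    exact Finset.sum_le_sum fun t ht => Nat.mul_le_mul_left _ (Finset.mem_Icc.mp ht).2

lemma ig_of_ge {i j n : ℕ} (hi : 0 < i) (hj : i + (i - 1) ≤ j) (hn : i ≤ n) :
    n ∈ intervalGen i j := by
  set k := n / i with hk
  have hk1 : 1 ≤ k := (Nat.one_le_div_iff hi).mpr hn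
  refine ig_of_bounds (by omega) k n (Nat.div_mul_le_self n i) ?_
  have hmod : k * i + n % i = n := by rw [hk, mul_comm]; exact Nat.div_add_mod n i
  have hmodlt : n % i < i := Nat.mod_lt n hi
  have h1 : n ≤ k * i + (i - 1) := by omega
  have h2 : i - 1 ≤ k * (i - 1) := Nat.le_mul_of_pos_left _ hk1
  calc n ≤ k * i + k * (i - 1) := by omega
    _ = k * (i + (i - 1)) := by ring
    _ ≤ k * j := Nat.mul_le_mul_left k hj

theorem stmt10 (Λ : NumericalSemigroup) :
    (Λ.IsArf ∧ ∃ i j : ℕ, 0 < i ∧ i ≤ j ∧ Λ.carrier = intervalGen i j) ↔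
      ∃ c : ℕ, Λ.carrier = insert 0 (Set.Ici c) := by
  constructor
  · rintro ⟨harf, i, j, hi, hij, hc⟩
    rcases eq_or_lt_of_le (show 1 ≤ i from hi) with h1 | h1
    · -- i = 1 : carrier = ℕ
      refine ⟨0, ?_⟩
      subst h1
      rw [hc]
      ext n
      simp only [Set.mem_insert_iff, Set.mem_Ici, Nat.zero_le, or_true, iff_true]
      refine ig_of_bounds hij n n (by omega) ?_
      calc n = n * 1 := (mul_one n).symm
        _ ≤ n * j := Nat.mul_le_mul_left n (by omega)
    · -- i ≥ 2
      rcases eq_or_lt_of_le hij with h2 | h2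
      · -- j = i : complement infinite, contradiction
        exfalso
        subst h2
        have hinf : Λ.carrierᶜ.Infinite := by
          refine Set.infinite_of_injective_forall_mem
            (f := fun k : ℕ => k * i + 1) ?_ ?_
          · intro a b hab
            simp only at hab
            have : a * i = b * i := by omega
            exact Nat.eq_of_mul_eq_mul_right hi this
          · intro a
            simp only [Set.mem_compl_iff, hc]
            intro hmem
            obtain ⟨k, hk1, hk2⟩ := ig_bounds hmem
            have : k * i = a * i + 1 := le_antisymm hk1 hk2
            have h3 : (k * i) % i = 0 := Nat.mul_mod_left k i
            have h4 : (a * i + 1) % i = 1 := by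
              rw [add_comm, Nat.add_mul_mod_self_right]
              exact Nat.one_mod_eq_one.mpr (by omega)
            rw [this, h4] at h3
            exact one_ne_zero h3
        exact hinf Λ.finite_compl
      · -- i ≥ 2, j ≥ i + 1 : use Arf
        have hinfc : Λ.carrier.Infinite := by
          have := Λ.finite_compl.infinite_compl
          rwa [compl_compl] at this
        set p : ℕ → Prop := fun n => n ∈ Λ.carrier with hp
        have hinfp : (setOf p).Infinite := hinfc
        have hmono : StrictMono (Nat.nth p) := Nat.nth_strictMono hinfp
        have hrange : Set.range (Nat.nth p) = Λ.carrier := Nat.range_nth_of_infinite hinfp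
        have hmem_i : i ∈ Λ.carrier := by
          rw [hc]; exact ig_single (Finset.mem_Icc.mpr ⟨le_refl i, hij⟩)
        have hmem_i1 : i + 1 ∈ Λ.carrier := by
          rw [hc]; exact ig_single (Finset.mem_Icc.mpr ⟨by omega, h2⟩)
        have hmem_j : j ∈ Λ.carrier := by
          rw [hc]; exact ig_single (Finset.mem_Icc.mpr ⟨hij, le_refl j⟩)
        obtain ⟨a, ha⟩ : ∃ a, Nat.nth p a = i := by
          rw [← hrange] at hmem_i; exact hmem_i
        obtain ⟨b, hb⟩ : ∃ b, Nat.nth p b = i + 1 := by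
          rw [← hrange] at hmem_i1; exact hmem_i1
        obtain ⟨d, hd⟩ : ∃ d, Nat.nth p d = j := by
          rw [← hrange] at hmem_j; exact hmem_j
        have hab : a ≤ b := le_of_lt (hmono.lt_iff_lt.mp (by omega))
        have hbd : b ≤ d := hmono.le_iff_le.mp (by omega)
        have harf' := harf (Nat.nth p) ⟨hmono, hrange⟩ d b a hab hbd
        rw [ha, hb, hd] at harf'
        have hj1 : j + 1 ∈ Λ.carrier := by
          have : j + (i + 1) - i = j + 1 := by omega
          rwa [this] at harf'
        rw [hc] at hj1
        obtain ⟨k, hk1, hk2⟩ := ig_bounds hj1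
        have hk2' : 2 ≤ k := by
          by_contra hlt
          interval_cases k <;> omega
        have h2i : 2 * i ≤ j + 1 :=
          le_trans (Nat.mul_le_mul_right i hk2') hk1
        -- carrier = insert 0 (Ici i)
        refine ⟨i, ?_⟩
        rw [hc]
        ext n
        constructor
        · intro hn
          obtain ⟨k', hk'1, hk'2⟩ := ig_bounds hn
          rcases Nat.eq_zero_or_pos k' with h | h
          · subst h; simp at hk'2; simp [hk'2]
          · right
            exact le_trans (Nat.le_mul_of_pos_left i h) hk'1
        · rintro (h | h)
          · subst h; exact ig_zero i j
          · exact ig_of_ge hi (by omega) h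
  · rintro ⟨c, hc⟩
    constructor
    · -- Arf
      intro f ⟨hmono, hrange⟩ I J K hKJ hJI
      have hKI : f K ≤ f I := hmono.monotone (le_trans hKJ hJI)
      have hKJ' : f K ≤ f J := hmono.monotone hKJ
      have hJmem : f J ∈ Λ.carrier := hrange ▸ Set.mem_range_self J
      have hImem : f I ∈ Λ.carrier := hrange ▸ Set.mem_range_self I
      rw [hc] at hJmem ⊢
      rcases hJmem with h | h
      · have h0 : f K = 0 := by omega
        have : f I + f J - f K = f I := by omega
        rw [this, ← hc]; exact hImem
      · right
        simp only [Set.mem_Ici] at h ⊢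
        omega
    · -- interval generated
      rcases Nat.eq_zero_or_pos c with h | h
      · refine ⟨1, 1, one_pos, le_refl 1, ?_⟩
        subst h
        rw [hc]
        ext n
        simp only [Set.mem_insert_iff, Set.mem_Ici, Nat.zero_le, or_true, true_iff]
        exact ig_of_bounds (le_refl 1) n n (by omega) (by omega)
      · refine ⟨c, 2 * c - 1, h, by omega, ?_⟩
        rw [hc]
        ext n
        constructor
        · rintro (hn | hn)
          · subst hn; exact ig_zero _ _
          · exact ig_of_ge h (by omega) hn
        · intro hn
          obtain ⟨k, hk1, hk2⟩ := ig_bounds hn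
          rcases Nat.eq_zero_or_pos k with hk | hk
          · subst hk; simp at hk2; simp [hk2]
          · right
            exact le_trans (Nat.le_mul_of_pos_left c hk) hk1
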